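/- Let (Ω, μ) be a finite measure space, let M ∈ ℝ, and let u ∈ L⁴(μ) be a real-valued function with ∫_Ω u dμ = M·μ(Ω). Then ∫_Ω (u³ − u)·(u − M) dμ ≥ 2·∫_Ω (u⁴/4 − u²/2) dμ − (27·M⁴/32)·μ(Ω). -/

import Mathlib

open MeasureTheory

/-- For the double-well potential `f(x) = x⁴/4 - x²/2` with `f'(x) = x³ - x`: if `u ∈ L⁴(μ)`
on a finite measure space has mean value `M` (i.e. `∫ u dμ = M μ(Ω)`), then
`∫ f'(u)(u - M) dμ ≥ 2 ∫ f(u) dμ - (27 M⁴/32) μ(Ω)`. -/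
theorem double_well_coercivity {Ω : Type*} [MeasurableSpace Ω] (μ : Measure Ω)
    [IsFiniteMeasure μ] (M : ℝ) (u : Ω → ℝ) (hu : MemLp u 4 μ)
    (hmean : ∫ x, u x ∂μ = M * (μ Set.univ).toReal) :
    ∫ x, (u x ^ 3 - u x) * (u x - M) ∂μ
      ≥ 2 * ∫ x, (u x ^ 4 / 4 - u x ^ 2 / 2) ∂μ
        - (27 * M ^ 4 / 32) * (μ Set.univ).toReal := by
  have h4norm : Integrable (fun x => ‖u x‖ ^ ((4 : ENNReal)).toReal) μ :=
    hu.integrable_norm_rpow'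
  have h4norm' : Integrable (fun x => |u x| ^ (4 : ℕ)) μ := by
    have h := h4norm
    simp only [Real.norm_eq_abs] at h
    have heq : (fun x => |u x| ^ (4 : ℕ)) = fun x => |u x| ^ ((4 : ENNReal)).toReal := by
      funext x
      rw [show ((4 : ENNReal)).toReal = ((4 : ℕ) : ℝ) by norm_num, Real.rpow_natCast]
    rw [heq]; exact h
  have hmeas : AEStronglyMeasurable u μ := hu.1
  have hpow : ∀ k : ℕ, k ≤ 4 → Integrable (fun x => u x ^ k) μ := by
    intro k hk
    apply Integrable.mono' ((integrable_const (1 : ℝ)).add h4norm')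
    · exact hmeas.pow k
    · filter_upwards with x
      rw [Real.norm_eq_abs, abs_pow]
      simp only [Pi.add_apply]
      by_cases h : |u x| ≤ 1
      · have : |u x| ^ k ≤ 1 := pow_le_one₀ (abs_nonneg _) h
        have h2 : (0:ℝ) ≤ |u x| ^ 4 := by positivity
        linarith
      · push_neg at h
        have : |u x| ^ k ≤ |u x| ^ 4 := pow_le_pow_right₀ h.le hk
        linarith
  have hi1 : Integrable u μ := by simpa using hpow 1 (by norm_num)
  have hi2 : Integrable (fun x => u x ^ 2) μ := hpow 2 (by norm_num)
  have hi3 : Integrable (fun x => u x ^ 3) μ := hpow 3 (by norm_num)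
  have hi4 : Integrable (fun x => u x ^ 4) μ := hpow 4 le_rfl
  -- key pointwise bound : x⁴/2 - M x³ ≥ -27 M⁴/32
  have hkey : ∫ x, (u x ^ 4 / 2 - M * u x ^ 3) ∂μ
      ≥ (-(27 * M ^ 4 / 32)) * (μ Set.univ).toReal := by
    have hci : Integrable (fun _ : Ω => -(27 * M ^ 4 / 32)) μ := integrable_const _
    have hfi : Integrable (fun x => u x ^ 4 / 2 - M * u x ^ 3) μ :=
      (hi4.div_const 2).sub (hi3.const_mul M)
    have hpt : ∀ x, -(27 * M ^ 4 / 32) ≤ u x ^ 4 / 2 - M * u x ^ 3 := by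
      intro x
      nlinarith [sq_nonneg (2 * u x - 3 * M), sq_nonneg (2 * u x + M), sq_nonneg M,
        sq_nonneg (u x)]
    have h := integral_mono hci hfi hpt
    rw [integral_const, smul_eq_mul] at h
    rw [show μ.real Set.univ = (μ Set.univ).toReal from rfl] at h
    linarith [h]
  have hA : Integrable (fun x => u x ^ 4 / 2 - M * u x ^ 3) μ :=
    (hi4.div_const 2).sub (hi3.const_mul M)
  have hB : Integrable (fun x => u x ^ 4 / 2) μ := hi4.div_const 2
  have hsplit : ∫ x, (u x ^ 3 - u x) * (u x - M) ∂μ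
      = (∫ x, (u x ^ 4 / 2 - M * u x ^ 3) ∂μ) + (∫ x, u x ^ 4 ∂μ) / 2
        - ∫ x, u x ^ 2 ∂μ + M * ∫ x, u x ∂μ := by
    have h0 : ∫ x, (u x ^ 3 - u x) * (u x - M) ∂μ
        = ∫ x, ((u x ^ 4 / 2 - M * u x ^ 3) + u x ^ 4 / 2 - u x ^ 2 + M * u x) ∂μ :=
      integral_congr_ae (Filter.Eventually.of_forall fun x => by ring)
    have hAB : Integrable (fun x => u x ^ 4 / 2 - M * u x ^ 3 + u x ^ 4 / 2) μ := hA.add hB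
    have hABC : Integrable (fun x => u x ^ 4 / 2 - M * u x ^ 3 + u x ^ 4 / 2 - u x ^ 2) μ :=
      hAB.sub hi2
    have hD : Integrable (fun x => M * u x) μ := hi1.const_mul M
    rw [h0, integral_add hABC hD, integral_sub hAB hi2, integral_add hA hB, integral_div,
      integral_const_mul]
  have hsplit2 : ∫ x, (u x ^ 4 / 4 - u x ^ 2 / 2) ∂μ
      = (∫ x, u x ^ 4 ∂μ) / 4 - (∫ x, u x ^ 2 ∂μ) / 2 := by
    rw [integral_sub (hi4.div_const 4) (hi2.div_const 2), integral_div, integral_div]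
  have hM2 : 0 ≤ M ^ 2 * (μ Set.univ).toReal := by positivity
  rw [hsplit, hsplit2, hmean]
  nlinarith [hkey, hM2]
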